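/- arXiv:1906.03284 — 10 statements merged into one kernel-verified Lean document; each statement's English description precedes it below -/
import Mathlib

section
/- For every (γ1, γ2, p) with γ1 ∈ [0,1), γ2 ∈ [0,1) and p ∈ (0,1): if γ1 + γ2 < 1 then F(γ1, γ2, p) < 1, and if γ1 + γ2 = 1 then F(γ1, γ2, p) = 1. In particular F(0, 0, p) = 0 for all p ∈ (0,1). -/
noncomputable def F (γ1 γ2 p : ℝ) : ℝ :=
  γ1 * p / (γ1 * p + (1 - γ2) * (1 - p))
    - (1 - γ1) * p / ((1 - γ1) * p + γ2 * (1 - p)) + 1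

theorem stmt_2 (γ1 γ2 p : ℝ)
    (hγ1 : γ1 ∈ Set.Ico (0:ℝ) 1) (hγ2 : γ2 ∈ Set.Ico (0:ℝ) 1)
    (hp : p ∈ Set.Ioo (0:ℝ) 1) :
    (γ1 + γ2 < 1 → F γ1 γ2 p < 1) ∧
    (γ1 + γ2 = 1 → F γ1 γ2 p = 1) ∧
    (∀ q : ℝ, q ∈ Set.Ioo (0:ℝ) 1 → F 0 0 q = 0) := by
  obtain ⟨h1a, h1b⟩ := hγ1
  obtain ⟨h2a, h2b⟩ := hγ2
  obtain ⟨hpa, hpb⟩ := hp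
  have hA : 0 < γ1 * p + (1 - γ2) * (1 - p) := by nlinarith
  have hB : 0 < (1 - γ1) * p + γ2 * (1 - p) := by nlinarith
  refine ⟨fun hs => ?_, fun hs => ?_, fun q hq => ?_⟩
  · unfold F
    have key : γ1 * p / (γ1 * p + (1 - γ2) * (1 - p))
        < (1 - γ1) * p / ((1 - γ1) * p + γ2 * (1 - p)) := by
      rw [div_lt_div_iff₀ hA hB]
      nlinarith [mul_pos hpa (sub_pos.mpr hpb)]
    linarith
  · unfold F
    have key : γ1 * p / (γ1 * p + (1 - γ2) * (1 - p))
        = (1 - γ1) * p / ((1 - γ1) * p + γ2 * (1 - p)) := by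
      rw [div_eq_div_iff (ne_of_gt hA) (ne_of_gt hB)]
      have hγ : γ2 = 1 - γ1 := by linarith
      rw [hγ]; ring
    linarith
  · obtain ⟨hqa, hqb⟩ := hq
    unfold F
    have h1 : (1:ℝ) - q ≠ 0 := by linarith
    have h2 : q ≠ 0 := ne_of_gt hqa
    field_simp
    ring
end

section
/- F is strictly increasing in each of its first two arguments on D: for all p ∈ (0,1) and γ2 ∈ [0,1), if 0 ≤ γ1 < γ1' < 1 then F(γ1, γ2, p) < F(γ1', γ2, p); and for all p ∈ (0,1) and γ1 ∈ [0,1), if 0 ≤ γ2 < γ2' < 1 then F(γ1, γ2, p) < F(γ1, γ2', p). -/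
lemma frac_lt_x (x x' c : ℝ) (hx : 0 ≤ x) (hxx : x < x') (hc : 0 < c) :
    x / (x + c) < x' / (x' + c) := by
  rw [div_lt_div_iff₀ (by linarith) (by linarith)]
  nlinarith

lemma frac_le_x (x x' c : ℝ) (hx : 0 < x) (hxx : x ≤ x') (hc : 0 ≤ c) :
    x / (x + c) ≤ x' / (x' + c) := by
  rw [div_le_div_iff₀ (by linarith) (by linarith)]
  nlinarith

lemma frac_lt_c (x c c' : ℝ) (hx : 0 < x) (hc : 0 ≤ c) (hcc : c < c') :
    x / (x + c') < x / (x + c) := by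
  rw [div_lt_div_iff₀ (by linarith) (by linarith)]
  nlinarith

lemma frac_le_c (x c c' : ℝ) (hx : 0 ≤ x) (hc : 0 < c) (hcc : c ≤ c') :
    x / (x + c') ≤ x / (x + c) := by
  rw [div_le_div_iff₀ (by linarith) (by linarith)]
  nlinarith

theorem stmt_4 :
    (∀ p γ2 γ1 γ1' : ℝ, p ∈ Set.Ioo (0:ℝ) 1 → γ2 ∈ Set.Ico (0:ℝ) 1 →
      0 ≤ γ1 → γ1 < γ1' → γ1' < 1 → F γ1 γ2 p < F γ1' γ2 p) ∧
    (∀ p γ1 γ2 γ2' : ℝ, p ∈ Set.Ioo (0:ℝ) 1 → γ1 ∈ Set.Ico (0:ℝ) 1 →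
      0 ≤ γ2 → γ2 < γ2' → γ2' < 1 → F γ1 γ2 p < F γ1 γ2' p) := by
  constructor
  · rintro p γ2 γ1 γ1' ⟨hp0, hp1⟩ ⟨hγ20, hγ21⟩ h1 h2 h3
    unfold F
    have hA : γ1 * p / (γ1 * p + (1 - γ2) * (1 - p))
        < γ1' * p / (γ1' * p + (1 - γ2) * (1 - p)) := by
      apply frac_lt_x
      · positivity
      · nlinarith
      · nlinarith
    have hB : (1 - γ1') * p / ((1 - γ1') * p + γ2 * (1 - p))
        ≤ (1 - γ1) * p / ((1 - γ1) * p + γ2 * (1 - p)) := by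
      apply frac_le_x
      · nlinarith
      · nlinarith
      · nlinarith
    linarith
  · rintro p γ1 γ2 γ2' ⟨hp0, hp1⟩ ⟨hγ10, hγ11⟩ h1 h2 h3
    unfold F
    have hA : γ1 * p / (γ1 * p + (1 - γ2) * (1 - p))
        ≤ γ1 * p / (γ1 * p + (1 - γ2') * (1 - p)) := by
      apply frac_le_c
      · positivity
      · nlinarith
      · nlinarith
    have hB : (1 - γ1) * p / ((1 - γ1) * p + γ2' * (1 - p))
        < (1 - γ1) * p / ((1 - γ1) * p + γ2 * (1 - p)) := by
      apply frac_lt_c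
      · nlinarith
      · nlinarith
      · nlinarith
    linarith
end

section
/- If in addition p10, p11, q0, q1 all lie in [0,1], then under the single equalized-odds constraint (p10 − q0)·e + q0 = (p11 − q1)·f + q1 the bias of the derived predictor for the class Y=1 is bounded as |α1·(p10 − q0) − β1·(p11 − q1) + q0 − q1| ≤ |α1 − β1| · ( w0 + 1 − w1 ). -/
theorem stmt_6 (α1 β1 w0 w1 p10 p11 q0 q1 : ℝ)
    (hα1 : α1 ∈ Set.Icc (0:ℝ) 1) (hβ1 : β1 ∈ Set.Icc (0:ℝ) 1)
    (hw0 : w0 ∈ Set.Icc (0:ℝ) 1) (hw1 : w1 ∈ Set.Icc (0:ℝ) 1)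
    (hp10 : p10 ∈ Set.Icc (0:ℝ) 1) (hp11 : p11 ∈ Set.Icc (0:ℝ) 1)
    (hq0 : q0 ∈ Set.Icc (0:ℝ) 1) (hq1 : q1 ∈ Set.Icc (0:ℝ) 1)
    (hcon : (p10 - q0) * (α1 + (β1 - α1) * w0) + q0
          = (p11 - q1) * (α1 + (β1 - α1) * w1) + q1) :
    |α1 * (p10 - q0) - β1 * (p11 - q1) + q0 - q1|
      ≤ |α1 - β1| * (w0 + 1 - w1) := by
  obtain ⟨hw0l, hw0u⟩ := hw0
  obtain ⟨hw1l, hw1u⟩ := hw1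
  obtain ⟨hp10l, hp10u⟩ := hp10
  obtain ⟨hp11l, hp11u⟩ := hp11
  obtain ⟨hq0l, hq0u⟩ := hq0
  obtain ⟨hq1l, hq1u⟩ := hq1
  have key : α1 * (p10 - q0) - β1 * (p11 - q1) + q0 - q1
      = (α1 - β1) * ((1 - w1) * (p11 - q1) + w0 * (p10 - q0)) := by
    linear_combination hcon
  rw [key, abs_mul]
  have h1 : |(1 - w1) * (p11 - q1) + w0 * (p10 - q0)| ≤ w0 + 1 - w1 := by
    rw [abs_le]
    constructor <;> nlinarith
  exact mul_le_mul_of_nonneg_left h1 (abs_nonneg _)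
end

section
/- (Core of Theorem 1, class Y=1.) Let γ0, γ1 ∈ [0,1) be the perturbation probabilities P[A_c≠A | Y=1, A=0] and P[A_c≠A | Y=1, A=1], let π ∈ (0,1) be P[A=1 | Y=1], and set w0 = γ1·π/(γ1·π + (1−γ0)·(1−π)) and w1 = (1−γ1)·π/((1−γ1)·π + γ0·(1−π)). If p10, p11, q0, q1 ∈ [0,1] satisfy the constraint (p10 − q0)·e + q0 = (p11 − q1)·f + q1 with e = α1 + (β1−α1)·w0 and f = α1 + (β1−α1)·w1, then |α1·(p10 − q0) − β1·(p11 − q1) + q0 − q1| ≤ |α1 − β1| · F(γ1, γ0, π). -/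
theorem stmt_7 (α1 β1 γ0 γ1 π w0 w1 p10 p11 q0 q1 : ℝ)
    (hα1 : α1 ∈ Set.Icc (0:ℝ) 1) (hβ1 : β1 ∈ Set.Icc (0:ℝ) 1)
    (hγ0 : γ0 ∈ Set.Ico (0:ℝ) 1) (hγ1 : γ1 ∈ Set.Ico (0:ℝ) 1)
    (hπ : π ∈ Set.Ioo (0:ℝ) 1)
    (hw0 : w0 = γ1 * π / (γ1 * π + (1 - γ0) * (1 - π)))
    (hw1 : w1 = (1 - γ1) * π / ((1 - γ1) * π + γ0 * (1 - π)))
    (hp10 : p10 ∈ Set.Icc (0:ℝ) 1) (hp11 : p11 ∈ Set.Icc (0:ℝ) 1)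
    (hq0 : q0 ∈ Set.Icc (0:ℝ) 1) (hq1 : q1 ∈ Set.Icc (0:ℝ) 1)
    (hcon : (p10 - q0) * (α1 + (β1 - α1) * w0) + q0
          = (p11 - q1) * (α1 + (β1 - α1) * w1) + q1) :
    |α1 * (p10 - q0) - β1 * (p11 - q1) + q0 - q1|
      ≤ |α1 - β1| * F γ1 γ0 π := by
  obtain ⟨hγ00, hγ01⟩ := hγ0
  obtain ⟨hγ10, hγ11⟩ := hγ1
  obtain ⟨hπ0, hπ1⟩ := hπ
  have hd0 : 0 < γ1 * π + (1 - γ0) * (1 - π) := by nlinarith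
  have hd1 : 0 < (1 - γ1) * π + γ0 * (1 - π) := by nlinarith
  have hw0nn : 0 ≤ w0 := by
    rw [hw0]; exact div_nonneg (by nlinarith) hd0.le
  have hw1le : w1 ≤ 1 := by
    rw [hw1, div_le_one hd1]; nlinarith
  have hF : F γ1 γ0 π = w0 + (1 - w1) := by
    rw [F, hw0, hw1]; ring
  have key : α1 * (p10 - q0) - β1 * (p11 - q1) + q0 - q1
      = (α1 - β1) * ((p10 - q0) * w0 + (p11 - q1) * (1 - w1)) := by
    linear_combination hcon
  rw [key, abs_mul, hF]
  apply mul_le_mul_of_nonneg_left _ (abs_nonneg _)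
  have hx : |p10 - q0| ≤ 1 := by
    rw [abs_le]; constructor <;> [linarith [hp10.1, hq0.2]; linarith [hp10.2, hq0.1]]
  have hy : |p11 - q1| ≤ 1 := by
    rw [abs_le]; constructor <;> [linarith [hp11.1, hq1.2]; linarith [hp11.2, hq1.1]]
  calc |(p10 - q0) * w0 + (p11 - q1) * (1 - w1)|
      ≤ |(p10 - q0) * w0| + |(p11 - q1) * (1 - w1)| := abs_add_le _ _
    _ ≤ w0 + (1 - w1) := by
        rw [abs_mul, abs_mul, abs_of_nonneg hw0nn, abs_of_nonneg (by linarith : (0:ℝ) ≤ 1 - w1)]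
        have := mul_le_mul_of_nonneg_right hx hw0nn
        have := mul_le_mul_of_nonneg_right hy (by linarith : (0:ℝ) ≤ 1 - w1)
        linarith
end

section
/- (Bias reduction under bounded perturbation.) In the setting of the previous statement, if moreover γ0 + γ1 ≤ 1, then |α1·(p10 − q0) − β1·(p11 − q1) + q0 − q1| ≤ |α1 − β1|; and if γ0 + γ1 < 1 and α1 ≠ β1, then the inequality is strict. -/
theorem stmt_8 (α1 β1 γ0 γ1 π w0 w1 p10 p11 q0 q1 : ℝ)
    (hα1 : α1 ∈ Set.Icc (0:ℝ) 1) (hβ1 : β1 ∈ Set.Icc (0:ℝ) 1)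
    (hγ0 : γ0 ∈ Set.Ico (0:ℝ) 1) (hγ1 : γ1 ∈ Set.Ico (0:ℝ) 1)
    (hπ : π ∈ Set.Ioo (0:ℝ) 1)
    (hw0 : w0 = γ1 * π / (γ1 * π + (1 - γ0) * (1 - π)))
    (hw1 : w1 = (1 - γ1) * π / ((1 - γ1) * π + γ0 * (1 - π)))
    (hp10 : p10 ∈ Set.Icc (0:ℝ) 1) (hp11 : p11 ∈ Set.Icc (0:ℝ) 1)
    (hq0 : q0 ∈ Set.Icc (0:ℝ) 1) (hq1 : q1 ∈ Set.Icc (0:ℝ) 1)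
    (hcon : (p10 - q0) * (α1 + (β1 - α1) * w0) + q0
          = (p11 - q1) * (α1 + (β1 - α1) * w1) + q1) :
    (γ0 + γ1 ≤ 1 →
      |α1 * (p10 - q0) - β1 * (p11 - q1) + q0 - q1| ≤ |α1 - β1|) ∧
    (γ0 + γ1 < 1 → α1 ≠ β1 →
      |α1 * (p10 - q0) - β1 * (p11 - q1) + q0 - q1| < |α1 - β1|) := by
  obtain ⟨hγ00, hγ01⟩ := hγ0
  obtain ⟨hγ10, hγ11⟩ := hγ1
  obtain ⟨hπ0, hπ1⟩ := hπ
  have hπ1' : (0:ℝ) < 1 - π := by linarith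
  have hd0 : 0 < γ1 * π + (1 - γ0) * (1 - π) := by nlinarith
  have hd1 : 0 < (1 - γ1) * π + γ0 * (1 - π) := by nlinarith
  have hw0nn : 0 ≤ w0 := by rw [hw0]; positivity
  have hw1le : w1 ≤ 1 := by
    rw [hw1, div_le_one hd1]; nlinarith
  have habs_a : |p10 - q0| ≤ 1 := by
    rw [abs_le]; constructor
    · linarith [hp10.1, hq0.2]
    · linarith [hp10.2, hq0.1]
  have habs_b : |p11 - q1| ≤ 1 := by
    rw [abs_le]; constructor
    · linarith [hp11.1, hq1.2]
    · linarith [hp11.2, hq1.1]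
  have hB : α1 * (p10 - q0) - β1 * (p11 - q1) + q0 - q1
      = (α1 - β1) * ((p10 - q0) * w0 + (p11 - q1) * (1 - w1)) := by
    linear_combination hcon
  have hs : |(p10 - q0) * w0 + (p11 - q1) * (1 - w1)| ≤ w0 + (1 - w1) := by
    have h1 := abs_add_le ((p10 - q0) * w0) ((p11 - q1) * (1 - w1))
    rw [abs_mul, abs_mul, abs_of_nonneg hw0nn,
      abs_of_nonneg (by linarith : (0:ℝ) ≤ 1 - w1)] at h1
    have h2 : |p10 - q0| * w0 ≤ 1 * w0 := mul_le_mul_of_nonneg_right habs_a hw0nn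
    have h3 : |p11 - q1| * (1 - w1) ≤ 1 * (1 - w1) :=
      mul_le_mul_of_nonneg_right habs_b (by linarith)
    linarith
  constructor
  · intro hsum
    have hww : w0 ≤ w1 := by
      rw [hw0, hw1, div_le_div_iff₀ hd0 hd1]
      nlinarith [mul_nonneg (mul_nonneg hπ0.le hπ1'.le) (by linarith : (0:ℝ) ≤ 1 - γ0 - γ1)]
    have hs1 : |(p10 - q0) * w0 + (p11 - q1) * (1 - w1)| ≤ 1 := by linarith
    rw [hB, abs_mul]
    calc |α1 - β1| * |(p10 - q0) * w0 + (p11 - q1) * (1 - w1)|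
        ≤ |α1 - β1| * 1 := mul_le_mul_of_nonneg_left hs1 (abs_nonneg _)
      _ = |α1 - β1| := mul_one _
  · intro hsum hne
    have hww : w0 < w1 := by
      rw [hw0, hw1, div_lt_div_iff₀ hd0 hd1]
      nlinarith [mul_pos (mul_pos hπ0 hπ1') (by linarith : (0:ℝ) < 1 - γ0 - γ1)]
    have hs1 : |(p10 - q0) * w0 + (p11 - q1) * (1 - w1)| < 1 := by linarith
    have hpos : 0 < |α1 - β1| := abs_pos.mpr (sub_ne_zero.mpr hne)
    rw [hB, abs_mul]
    calc |α1 - β1| * |(p10 - q0) * w0 + (p11 - q1) * (1 - w1)|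
        < |α1 - β1| * 1 := mul_lt_mul_of_pos_left hs1 hpos
      _ = |α1 - β1| := mul_one _
end

section
/- (Balanced case: difference of the two '−1' mixing probabilities.) Suppose real numbers p10, p11, q0, q1 satisfy the two balanced equalized-odds constraints (p10 − q0)·((1−γ)α1 + γβ1) + q0 = (p11 − q1)·((1−γ)β1 + γα1) + q1 and (p10 − q0)·((1−γ)α2 + γβ2) + q0 = (p11 − q1)·((1−γ)β2 + γα2) + q1, and that u ≠ 0 and v ≠ 0. Then (p10 − q0)·u = (p11 − q1)·v, and with Δ := (p10 − q0)·u one has q0 − q1 = Δ·(1−2γ)·(α2·β1 − α1·β2)/(2·u·v). -/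
theorem stmt_12 (α1 α2 β1 β2 γ p10 p11 q0 q1 : ℝ)
    (hα1 : α1 ∈ Set.Icc (0:ℝ) 1) (hα2 : α2 ∈ Set.Icc (0:ℝ) 1)
    (hβ1 : β1 ∈ Set.Icc (0:ℝ) 1) (hβ2 : β2 ∈ Set.Icc (0:ℝ) 1)
    (hγ : γ ∈ Set.Icc (0:ℝ) 1)
    (hcon1 : (p10 - q0) * ((1 - γ) * α1 + γ * β1) + q0
           = (p11 - q1) * ((1 - γ) * β1 + γ * α1) + q1)
    (hcon2 : (p10 - q0) * ((1 - γ) * α2 + γ * β2) + q0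
           = (p11 - q1) * ((1 - γ) * β2 + γ * α2) + q1)
    (hu : ((1 - γ) * (α2 - α1) + γ * (β2 - β1)) / 2 ≠ 0)
    (hv : ((1 - γ) * (β2 - β1) + γ * (α2 - α1)) / 2 ≠ 0) :
    (p10 - q0) * (((1 - γ) * (α2 - α1) + γ * (β2 - β1)) / 2)
      = (p11 - q1) * (((1 - γ) * (β2 - β1) + γ * (α2 - α1)) / 2) ∧
    q0 - q1 = ((p10 - q0) * (((1 - γ) * (α2 - α1) + γ * (β2 - β1)) / 2))
        * (1 - 2 * γ) * (α2 * β1 - α1 * β2) /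
        (2 * (((1 - γ) * (α2 - α1) + γ * (β2 - β1)) / 2)
           * (((1 - γ) * (β2 - β1) + γ * (α2 - α1)) / 2)) := by
  have h1 : (p10 - q0) * (((1 - γ) * (α2 - α1) + γ * (β2 - β1)) / 2)
      = (p11 - q1) * (((1 - γ) * (β2 - β1) + γ * (α2 - α1)) / 2) := by
    linear_combination (hcon2 - hcon1) / 2
  refine ⟨h1, ?_⟩
  rw [eq_div_iff (by
    intro h
    rcases mul_eq_zero.mp h with h' | h'
    · rcases mul_eq_zero.mp h' with h'' | h''
      · norm_num at h''
      · exact hu h''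
    · exact hv h')]
  linear_combination (2 * (((1 - γ) * (α2 - α1) + γ * (β2 - β1)) / 2)
      * (((1 - γ) * (β2 - β1) + γ * (α2 - α1)) / 2)) * hcon1
    - (2 * (((1 - γ) * (α2 - α1) + γ * (β2 - β1)) / 2)
      * ((1 - γ) * β1 + γ * α1)) * h1
end

section
/- (Balanced case: ordering of the '−1' mixing probabilities in an equalized odds solution.) In the setting of the previous statement, if moreover α1 > α2, β1 > β2, γ ∈ [0,1/2], α2·β1 ≥ α1·β2, and Δ := (p10 − q0)·u ≤ 0, then q0 − q1 ≤ 0, i.e. p_{−1,0} ≤ p_{−1,1}. -/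
theorem stmt_13 (α1 α2 β1 β2 γ p10 p11 q0 q1 : ℝ)
    (hα1 : α1 ∈ Set.Icc (0:ℝ) 1) (hα2 : α2 ∈ Set.Icc (0:ℝ) 1)
    (hβ1 : β1 ∈ Set.Icc (0:ℝ) 1) (hβ2 : β2 ∈ Set.Icc (0:ℝ) 1)
    (hα : α2 < α1) (hβ : β2 < β1)
    (hγ : γ ∈ Set.Icc (0:ℝ) (1/2))
    (hαβ : α1 * β2 ≤ α2 * β1)
    (hcon1 : (p10 - q0) * ((1 - γ) * α1 + γ * β1) + q0
           = (p11 - q1) * ((1 - γ) * β1 + γ * α1) + q1)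
    (hcon2 : (p10 - q0) * ((1 - γ) * α2 + γ * β2) + q0
           = (p11 - q1) * ((1 - γ) * β2 + γ * α2) + q1)
    (hu : ((1 - γ) * (α2 - α1) + γ * (β2 - β1)) / 2 ≠ 0)
    (hv : ((1 - γ) * (β2 - β1) + γ * (α2 - α1)) / 2 ≠ 0)
    (hΔ : (p10 - q0) * (((1 - γ) * (α2 - α1) + γ * (β2 - β1)) / 2) ≤ 0) :
    q0 - q1 ≤ 0 := by
  obtain ⟨hγ0, hγh⟩ := hγ
  have hs : (0:ℝ) < 1 - γ := by linarith
  have huneg : ((1 - γ) * (α2 - α1) + γ * (β2 - β1)) / 2 < 0 := by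
    nlinarith [mul_pos hs (sub_pos.2 hα), mul_nonneg hγ0 (sub_pos.2 hβ).le]
  have hx : 0 ≤ p10 - q0 := by
    by_contra h
    push_neg at h
    nlinarith [mul_pos_of_neg_of_neg h huneg]
  have hB : 0 < ((1 - γ) * β1 + γ * α1) - ((1 - γ) * β2 + γ * α2) := by
    nlinarith [mul_pos hs (sub_pos.2 hβ), mul_nonneg hγ0 (sub_pos.2 hα).le]
  have hkey : (q0 - q1) * (((1 - γ) * β1 + γ * α1) - ((1 - γ) * β2 + γ * α2))
      = (p10 - q0) * ((1 - 2*γ) * (α1 * β2 - α2 * β1)) := by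
    linear_combination (-((1 - γ) * β2 + γ * α2)) * hcon1
      + ((1 - γ) * β1 + γ * α1) * hcon2
  have hrhs : (p10 - q0) * ((1 - 2*γ) * (α1 * β2 - α2 * β1)) ≤ 0 := by
    have h1 : (0:ℝ) ≤ 1 - 2*γ := by linarith
    have h2 : α1 * β2 - α2 * β1 ≤ 0 := by linarith
    exact mul_nonpos_of_nonneg_of_nonpos hx (mul_nonpos_of_nonneg_of_nonpos h1 h2)
  nlinarith [hkey, hrhs, mul_pos hB hB]
end

section
/- (Balanced case: difference of the two '+1' mixing probabilities.) Suppose real numbers p10, p11, q1 satisfy, with q0 = 0, the two balanced equalized-odds constraints p10·((1−γ)α1 + γβ1) = (p11 − q1)·((1−γ)β1 + γα1) + q1 and p10·((1−γ)α2 + γβ2) = (p11 − q1)·((1−γ)β2 + γα2) + q1, and that u ≠ 0 and v ≠ 0. Then with Δ := p10·u one has p10 − p11 = Δ·(1−2γ)·(β2 − β1 + α1 − α2 + α2·β1 − α1·β2)/(2·u·v). -/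
theorem stmt_14 (α1 α2 β1 β2 γ p10 p11 q1 : ℝ)
    (hα1 : α1 ∈ Set.Icc (0:ℝ) 1) (hα2 : α2 ∈ Set.Icc (0:ℝ) 1)
    (hβ1 : β1 ∈ Set.Icc (0:ℝ) 1) (hβ2 : β2 ∈ Set.Icc (0:ℝ) 1)
    (hγ : γ ∈ Set.Icc (0:ℝ) 1)
    (hcon1 : p10 * ((1 - γ) * α1 + γ * β1)
           = (p11 - q1) * ((1 - γ) * β1 + γ * α1) + q1)
    (hcon2 : p10 * ((1 - γ) * α2 + γ * β2)
           = (p11 - q1) * ((1 - γ) * β2 + γ * α2) + q1)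
    (hu : ((1 - γ) * (α2 - α1) + γ * (β2 - β1)) / 2 ≠ 0)
    (hv : ((1 - γ) * (β2 - β1) + γ * (α2 - α1)) / 2 ≠ 0) :
    p10 - p11 = (p10 * (((1 - γ) * (α2 - α1) + γ * (β2 - β1)) / 2))
        * (1 - 2 * γ) * (β2 - β1 + α1 - α2 + α2 * β1 - α1 * β2) /
        (2 * (((1 - γ) * (α2 - α1) + γ * (β2 - β1)) / 2)
           * (((1 - γ) * (β2 - β1) + γ * (α2 - α1)) / 2)) := by
  have hu0 : (1 - γ) * (α2 - α1) + γ * (β2 - β1) ≠ 0 := by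
    intro h; apply hu; rw [h]; norm_num
  have hv0 : (1 - γ) * (β2 - β1) + γ * (α2 - α1) ≠ 0 := by
    intro h; apply hv; rw [h]; norm_num
  have h1 : p10 * ((1 - γ) * (α2 - α1) + γ * (β2 - β1))
      = (p11 - q1) * ((1 - γ) * (β2 - β1) + γ * (α2 - α1)) := by
    linear_combination hcon2 - hcon1
  have E : (p10 - p11) * ((1 - γ) * (β2 - β1) + γ * (α2 - α1))
      = p10 * ((1 - 2 * γ) * (β2 - β1 + α1 - α2 + α2 * β1 - α1 * β2)) := by
    linear_combination ((1 - γ) * (β2 - β1) + γ * (α2 - α1)) * hcon1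
      + (1 - ((1 - γ) * β1 + γ * α1)) * h1
  rw [eq_div_iff (mul_ne_zero (mul_ne_zero two_ne_zero hu) hv)]
  linear_combination (((1 - γ) * (α2 - α1) + γ * (β2 - β1)) / 2) * E
end

section
/- (Case 1 error difference.) For all real α1, α2, β1, β2 and γ with v ≠ 0, where u = ((1−γ)·(α2−α1) + γ·(β2−β1))/2 and v = ((1−γ)·(β2−β1) + γ·(α2−α1))/2, one has the identity (α2 − α1) − (u/v)·(β2 − β1) = γ·((α2−α1)² − (β2−β1)²)/(2v). Moreover, if α1 > α2, β1 > β2, β1 − β2 > α1 − α2, and γ ∈ (0, 1/2], then this quantity is strictly positive. -/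
theorem stmt_16 (α1 α2 β1 β2 γ : ℝ)
    (hv : ((1 - γ) * (β2 - β1) + γ * (α2 - α1)) / 2 ≠ 0) :
    ((α2 - α1) - ((((1 - γ) * (α2 - α1) + γ * (β2 - β1)) / 2)
        / (((1 - γ) * (β2 - β1) + γ * (α2 - α1)) / 2)) * (β2 - β1)
      = γ * ((α2 - α1) ^ 2 - (β2 - β1) ^ 2) /
          (2 * (((1 - γ) * (β2 - β1) + γ * (α2 - α1)) / 2))) ∧
    (α2 < α1 → β2 < β1 → α1 - α2 < β1 - β2 → 0 < γ → γ ≤ 1/2 →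
      0 < (α2 - α1) - ((((1 - γ) * (α2 - α1) + γ * (β2 - β1)) / 2)
        / (((1 - γ) * (β2 - β1) + γ * (α2 - α1)) / 2)) * (β2 - β1)) := by
  have hid : ((α2 - α1) - ((((1 - γ) * (α2 - α1) + γ * (β2 - β1)) / 2)
        / (((1 - γ) * (β2 - β1) + γ * (α2 - α1)) / 2)) * (β2 - β1)
      = γ * ((α2 - α1) ^ 2 - (β2 - β1) ^ 2) /
          (2 * (((1 - γ) * (β2 - β1) + γ * (α2 - α1)) / 2))) := by
    have hv2 : (1 - γ) * (β2 - β1) + γ * (α2 - α1) ≠ 0 := by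
      intro h; exact hv (by rw [h]; ring)
    have hv3 : (1 - γ) * (β2 - β1) + (α2 - α1) * γ ≠ 0 := by rw [mul_comm (α2 - α1)]; exact hv2
    field_simp
    ring
  refine ⟨hid, fun h1 h2 h3 h4 h5 => ?_⟩
  rw [hid]
  have hvneg : (1 - γ) * (β2 - β1) + γ * (α2 - α1) < 0 := by nlinarith
  have h6 : (α2 - α1) ^ 2 - (β2 - β1) ^ 2 < 0 := by nlinarith
  have hnum : γ * ((α2 - α1) ^ 2 - (β2 - β1) ^ 2) < 0 := mul_neg_of_pos_of_neg h4 h6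
  have : 2 * (((1 - γ) * (β2 - β1) + γ * (α2 - α1)) / 2) < 0 := by linarith
  exact div_pos_of_neg_of_neg hnum this
end

section
/- (Case 2 main inequality.) Let α1, α2, β1, β2 ∈ [0,1] satisfy α1 > α2, β1 > β2, α2·β1 ≥ α1·β2 and β2 − β1 + α1 − α2 + α2·β1 − α1·β2 ≥ 0, and let γ0 ∈ (0, 1/2]. Then both denominators below are strictly positive and ( γ0·(β1 − β2 − α1 + α2)² + 2·(β1 − β2)·(α1 − α2) ) / ( (1−γ0)·(α1−α2) + γ0·(β1−β2) + (1−2γ0)·(α2·β1 − α1·β2) ) ≥ 2·(β1 − β2)·(α1 − α2) / ( (α1 − α2) + (α2·β1 − α1·β2) ), with equality if and only if α1 = β1 and α2 = β2. -/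
lemma key_19 (a b c γ : ℝ) (ha : 0 < a) (hb : 0 < b) (hc : 0 ≤ c)
    (hd : b - a ≤ c) (hγ : 0 < γ) (hγ2 : γ ≤ 1/2) :
    0 < (1 - γ) * a + γ * b + (1 - 2 * γ) * c ∧ 0 < a + c ∧
    2 * b * a / (a + c) ≤ (γ * (b - a) ^ 2 + 2 * b * a) / ((1 - γ) * a + γ * b + (1 - 2 * γ) * c) ∧
    ((γ * (b - a) ^ 2 + 2 * b * a) / ((1 - γ) * a + γ * b + (1 - 2 * γ) * c)
        = 2 * b * a / (a + c) ↔ (a = b ∧ c = 0)) := by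
  have hD1 : 0 < (1 - γ) * a + γ * b + (1 - 2 * γ) * c := by nlinarith
  have hD2 : 0 < a + c := by linarith
  have hab : 0 < a + b := by linarith
  have hK : 0 ≤ a * (a - b) + c * (a + b) := by
    nlinarith [mul_nonneg (by linarith : (0:ℝ) ≤ c - (b - a)) hb.le, sq_nonneg (a - b),
      mul_nonneg hc ha.le]
  refine ⟨hD1, hD2, ?_, ?_⟩
  · rw [div_le_div_iff₀ hD2 hD1]
    nlinarith [mul_nonneg (mul_nonneg hγ.le hab.le) hK]
  · constructor
    · intro h
      rw [div_eq_div_iff hD1.ne' hD2.ne'] at h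
      have hz : γ * ((a + b) * (a * (a - b) + c * (a + b))) = 0 := by linear_combination h
      have hK0 : a * (a - b) + c * (a + b) = 0 := by
        rcases mul_eq_zero.1 hz with h' | h'
        · exact absurd h' (ne_of_gt hγ)
        · rcases mul_eq_zero.1 h' with h'' | h''
          · exact absurd h'' (ne_of_gt hab)
          · exact h''
      have hle : a ≤ b := by nlinarith [mul_nonneg hc hab.le]
      have hge : b ≤ a := by
        nlinarith [mul_nonneg (by linarith : (0:ℝ) ≤ c - (b - a)) hb.le]
      have hab' : a = b := le_antisymm hle hge
      have hc0 : c = 0 := by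
        have h2 : c * (a + b) = 0 := by linear_combination hK0 - a * hab'
        exact (mul_eq_zero.1 h2).resolve_right hab.ne'
      exact ⟨hab', hc0⟩
    · rintro ⟨rfl, rfl⟩
      rw [div_eq_div_iff hD1.ne' hD2.ne']
      ring

theorem stmt_19 (α1 α2 β1 β2 γ0 : ℝ)
    (hα1 : α1 ∈ Set.Icc (0:ℝ) 1) (hα2 : α2 ∈ Set.Icc (0:ℝ) 1)
    (hβ1 : β1 ∈ Set.Icc (0:ℝ) 1) (hβ2 : β2 ∈ Set.Icc (0:ℝ) 1)
    (hα : α2 < α1) (hβ : β2 < β1)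
    (hαβ : α1 * β2 ≤ α2 * β1)
    (hcase : 0 ≤ β2 - β1 + α1 - α2 + α2 * β1 - α1 * β2)
    (hγ0 : γ0 ∈ Set.Ioc (0:ℝ) (1/2)) :
    0 < (1 - γ0) * (α1 - α2) + γ0 * (β1 - β2) + (1 - 2 * γ0) * (α2 * β1 - α1 * β2) ∧
    0 < (α1 - α2) + (α2 * β1 - α1 * β2) ∧
    (2 * (β1 - β2) * (α1 - α2) / ((α1 - α2) + (α2 * β1 - α1 * β2))
      ≤ (γ0 * (β1 - β2 - α1 + α2) ^ 2 + 2 * (β1 - β2) * (α1 - α2)) /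
          ((1 - γ0) * (α1 - α2) + γ0 * (β1 - β2) + (1 - 2 * γ0) * (α2 * β1 - α1 * β2))) ∧
    ((γ0 * (β1 - β2 - α1 + α2) ^ 2 + 2 * (β1 - β2) * (α1 - α2)) /
          ((1 - γ0) * (α1 - α2) + γ0 * (β1 - β2) + (1 - 2 * γ0) * (α2 * β1 - α1 * β2))
        = 2 * (β1 - β2) * (α1 - α2) / ((α1 - α2) + (α2 * β1 - α1 * β2))
      ↔ (α1 = β1 ∧ α2 = β2)) := by
  have e : β1 - β2 - α1 + α2 = (β1 - β2) - (α1 - α2) := by ring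
  rw [e]
  obtain ⟨h1, h2, h3, h4⟩ := key_19 (α1 - α2) (β1 - β2) (α2 * β1 - α1 * β2) γ0
    (by linarith) (by linarith) (by linarith) (by linarith) hγ0.1 hγ0.2
  refine ⟨h1, h2, h3, h4.trans ?_⟩
  constructor
  · rintro ⟨h5, h6⟩
    have h7 : (α1 - α2) * (α2 - β2) = 0 := by linear_combination h6 + α2 * h5
    have h8 : α2 = β2 := by
      rcases mul_eq_zero.1 h7 with h | h
      · linarith
      · linarith
    exact ⟨by linarith, h8⟩
  · rintro ⟨rfl, rfl⟩
    exact ⟨rfl, by ring⟩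
end
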